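/- Let R₁ and R₂ be invertible Hermitian trace-one operators on a finite-dimensional complex Hilbert space, and write |R_i| = √(R_i† R_i) (so |R₁|, |R₂| are positive definite). Define the space-time relative entropy S(R₁‖R₂) = Tr(|R₁| log|R₁|) − Tr(|R₁| log|R₂|) and the causality monotone C(R_i) = (‖R_i‖₁ − 1)/2, where ‖R_i‖₁ = Tr|R_i| is the trace norm. Then S(R₁‖R₂) ≥ Tr(|R₁| − |R₂|) = 2(C(R₁) − C(R₂)). -/

import Mathlib

open Matrix
open scoped ComplexOrder

/-- `|R| = √(Rᴴ R)`, the positive semidefinite absolute value of a matrix. -/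
noncomputable def absM {n : ℕ} (R : Matrix (Fin n) (Fin n) ℂ) :
    Matrix (Fin n) (Fin n) ℂ :=
  (Matrix.posSemidef_conjTranspose_mul_self R).1.eigenvectorUnitary.1 *
    diagonal ((↑) ∘ (√·) ∘ (Matrix.posSemidef_conjTranspose_mul_self R).1.eigenvalues) *
    (star (Matrix.posSemidef_conjTranspose_mul_self R).1.eigenvectorUnitary : Matrix (Fin n) (Fin n) ℂ)

/-- The matrix logarithm via the continuous functional calculus. -/
noncomputable def matLog {n : ℕ} (A : Matrix (Fin n) (Fin n) ℂ) :
    Matrix (Fin n) (Fin n) ℂ :=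
  cfc Real.log A

namespace SpacetimeAux

variable {n : ℕ}

lemma rc_eq (x : ℝ) : (RCLike.ofReal x : ℂ) = Complex.ofReal x := rfl

lemma scalar_klein {a b : ℝ} (ha : 0 < a) (hb : 0 < b) :
    a - b ≤ a * Real.log a - a * Real.log b := by
  have h := Real.log_le_sub_one_of_pos (div_pos hb ha)
  rw [Real.log_div hb.ne' ha.ne'] at h
  have h2 := mul_le_mul_of_nonneg_left h ha.le
  have h3 : a * (b / a) = b := by field_simp
  rw [mul_sub, mul_sub, h3, mul_one] at h2
  linarith

lemma trace_conj (U M : Matrix (Fin n) (Fin n) ℂ) (hU : star U * U = 1) :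
    (U * M * star U).trace = M.trace := by
  rw [trace_mul_comm, ← mul_assoc, hU, one_mul]

lemma conj_diag_mul (U : Matrix (Fin n) (Fin n) ℂ) (hU : star U * U = 1)
    (d e : Fin n → ℂ) :
    (U * diagonal d * star U) * (U * diagonal e * star U)
      = U * diagonal (fun i => d i * e i) * star U := by
  have h : diagonal d * ((star U * U) * (diagonal e * star U))
      = diagonal (fun i => d i * e i) * star U := by
    rw [hU, one_mul, ← mul_assoc, diagonal_mul_diagonal]
  simp only [mul_assoc] at h ⊢
  rw [h]

lemma trace_dWeW (W : Matrix (Fin n) (Fin n) ℂ) (d e : Fin n → ℂ) :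
    (diagonal d * W * diagonal e * star W).trace
      = ∑ i, ∑ j, d i * e j * (W i j * star (W i j)) := by
  simp only [Matrix.trace, Matrix.diag, mul_apply, diagonal_apply, star_apply,
    Finset.sum_ite_eq, Finset.mem_univ, if_true, ite_mul, zero_mul]
  refine Finset.sum_congr rfl fun i _ => Finset.sum_congr rfl fun j _ => ?_
  rw [show (fun x => d i * W i x * if x = j then e x else 0)
      = fun x => if x = j then d i * W i x * e x else 0 from funext fun x => by
        split <;> simp]
  rw [Finset.sum_ite_eq' Finset.univ j (fun k => d i * W i k * e k)]
  simp only [Finset.mem_univ, if_true]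
  ring

lemma absM_posSemidef (R : Matrix (Fin n) (Fin n) ℂ) : (absM R).PosSemidef := by
  unfold absM
  have hd : (diagonal ((↑) ∘ (√·) ∘ (Matrix.posSemidef_conjTranspose_mul_self R).1.eigenvalues) :
      Matrix (Fin n) (Fin n) ℂ).PosSemidef := by
    rw [posSemidef_diagonal_iff]
    intro i
    simp only [Function.comp_apply]
    exact Complex.zero_le_real.mpr (Real.sqrt_nonneg _)
  simpa [star_eq_conjTranspose] using hd.mul_mul_conjTranspose_same
    ((Matrix.posSemidef_conjTranspose_mul_self R).1.eigenvectorUnitary.1)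

lemma absM_mul_self (R : Matrix (Fin n) (Fin n) ℂ) : absM R * absM R = Rᴴ * R := by
  have hP := Matrix.posSemidef_conjTranspose_mul_self R
  unfold absM
  rw [conj_diag_mul _ (Unitary.star_mul_self_of_mem (SetLike.coe_mem _))]
  conv_rhs => rw [hP.1.spectral_theorem, Unitary.conjStarAlgAut_apply]
  congr 3
  funext i
  simp only [Function.comp_apply]
  rw [← Complex.ofReal_mul, Real.mul_self_sqrt (hP.eigenvalues_nonneg i)]
  rfl

lemma absM_eig_pos (R : Matrix (Fin n) (Fin n) ℂ) (hu : IsUnit R) (i : Fin n) :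
    0 < ((absM_posSemidef R).1).eigenvalues i := by
  have hP := Matrix.posSemidef_conjTranspose_mul_self R
  have hS : (absM R).PosSemidef := absM_posSemidef R
  have hnn := hS.eigenvalues_nonneg i
  refine lt_of_le_of_ne hnn fun h => ?_
  have hdet : (absM R).det ≠ 0 := by
    intro h0
    have h1 : (absM R).det * (absM R).det = (Rᴴ * R).det := by
      rw [← det_mul, absM_mul_self]
    have h2 : IsUnit (Rᴴ * R).det := by
      apply (Matrix.isUnit_iff_isUnit_det _).mp
      exact (by rw [← star_eq_conjTranspose R] at *; exact hu.star.mul hu)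
    rw [h0, zero_mul] at h1
    exact h2.ne_zero h1.symm
  apply hdet
  rw [hS.1.det_eq_prod_eigenvalues]
  refine Finset.prod_eq_zero (Finset.mem_univ i) ?_
  rw [← h]
  simp

end SpacetimeAux
open SpacetimeAux

set_option maxHeartbeats 2000000 in
theorem spacetime_relative_entropy_lower_bound
    (n : ℕ) (R₁ R₂ : Matrix (Fin n) (Fin n) ℂ)
    (h₁ : R₁.IsHermitian) (h₂ : R₂.IsHermitian)
    (hTr₁ : R₁.trace = 1) (hTr₂ : R₂.trace = 1)
    (hu₁ : IsUnit R₁) (hu₂ : IsUnit R₂) :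
    (absM R₁ - absM R₂).trace ≤
      (absM R₁ * matLog (absM R₁)).trace - (absM R₁ * matLog (absM R₂)).trace ∧
    (absM R₁ - absM R₂).trace =
      2 * ((((absM R₁).trace - 1) / 2) - (((absM R₂).trace - 1) / 2)) := by
  refine ⟨?_, by rw [trace_sub]; ring⟩
  -- setup for A = absM R₁
  have hPA := absM_posSemidef R₁
  have hA : (absM R₁).IsHermitian := hPA.1
  set a : Fin n → ℝ := hA.eigenvalues with ha_def
  set U : Matrix (Fin n) (Fin n) ℂ := (hA.eigenvectorUnitary : Matrix (Fin n) (Fin n) ℂ) with hUdef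
  have hU1 : star U * U = 1 := Unitary.star_mul_self_of_mem (SetLike.coe_mem _)
  have hU2 : U * star U = 1 := Unitary.mul_star_self_of_mem (SetLike.coe_mem _)
  have hAeq : absM R₁ = U * diagonal (RCLike.ofReal ∘ a) * star U := by
    have h := hA.spectral_theorem
    rw [Unitary.conjStarAlgAut_apply] at h
    exact h
  have hlogA : matLog (absM R₁) = U * diagonal (RCLike.ofReal ∘ Real.log ∘ a) * star U := by
    rw [matLog, hA.cfc_eq, IsHermitian.cfc, Unitary.conjStarAlgAut_apply]
  have hapos : ∀ i, 0 < a i := absM_eig_pos R₁ hu₁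
  -- setup for B = absM R₂
  have hPB := absM_posSemidef R₂
  have hB : (absM R₂).IsHermitian := hPB.1
  set b : Fin n → ℝ := hB.eigenvalues with hb_def
  set V : Matrix (Fin n) (Fin n) ℂ := (hB.eigenvectorUnitary : Matrix (Fin n) (Fin n) ℂ) with hVdef
  have hV1 : star V * V = 1 := Unitary.star_mul_self_of_mem (SetLike.coe_mem _)
  have hV2 : V * star V = 1 := Unitary.mul_star_self_of_mem (SetLike.coe_mem _)
  have hBeq : absM R₂ = V * diagonal (RCLike.ofReal ∘ b) * star V := by
    have h := hB.spectral_theorem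
    rw [Unitary.conjStarAlgAut_apply] at h
    exact h
  have hlogB : matLog (absM R₂) = V * diagonal (RCLike.ofReal ∘ Real.log ∘ b) * star V := by
    rw [matLog, hB.cfc_eq, IsHermitian.cfc, Unitary.conjStarAlgAut_apply]
  have hbpos : ∀ j, 0 < b j := absM_eig_pos R₂ hu₂
  -- the overlap matrix
  set W : Matrix (Fin n) (Fin n) ℂ := star U * V with hWdef
  have hsW : star W = star V * U := by rw [hWdef]; simp
  have hW1 : W * star W = 1 := by
    rw [hWdef, hsW, mul_assoc, ← mul_assoc V, hV2, one_mul, hU1]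
  have hW2 : star W * W = 1 := by
    rw [hWdef, hsW, mul_assoc, ← mul_assoc U, hU2, one_mul, hV1]
  set c : Fin n → Fin n → ℝ := fun i j => Complex.normSq (W i j) with hc_def
  have hWc : ∀ i j, W i j * star (W i j) = ((c i j : ℝ) : ℂ) := by
    intro i j
    rw [hc_def]
    exact Complex.mul_conj (W i j)
  have hcnn : ∀ i j, 0 ≤ c i j := fun i j => Complex.normSq_nonneg _
  have hrow : ∀ i, ∑ j, c i j = 1 := by
    intro i
    have h : (W * star W) i i = 1 := by rw [hW1, one_apply_eq]
    rw [mul_apply] at h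
    have h2 : (((∑ j, c i j : ℝ)) : ℂ) = 1 := by
      rw [Complex.ofReal_sum]
      rw [← h]
      exact Finset.sum_congr rfl fun j _ => by rw [← hWc i j, star_apply]
    exact_mod_cast h2
  have hcol : ∀ j, ∑ i, c i j = 1 := by
    intro j
    have h : (star W * W) j j = 1 := by rw [hW2, one_apply_eq]
    rw [mul_apply] at h
    have h2 : (((∑ i, c i j : ℝ)) : ℂ) = 1 := by
      rw [Complex.ofReal_sum]
      rw [← h]
      exact Finset.sum_congr rfl fun i _ => by rw [← hWc i j, star_apply, mul_comm]
    exact_mod_cast h2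
  -- trace computations
  have T_A : (absM R₁).trace = ((∑ i, a i : ℝ) : ℂ) := by
    rw [hAeq, trace_conj _ _ hU1, trace_diagonal]
    push_cast
    rfl
  have T_B : (absM R₂).trace = ((∑ j, b j : ℝ) : ℂ) := by
    rw [hBeq, trace_conj _ _ hV1, trace_diagonal]
    push_cast
    rfl
  have T_AlogA : (absM R₁ * matLog (absM R₁)).trace
      = ((∑ i, a i * Real.log (a i) : ℝ) : ℂ) := by
    rw [hlogA, hAeq, conj_diag_mul U hU1, trace_conj _ _ hU1, trace_diagonal]
    push_cast
    rfl
  have T_AlogB : (absM R₁ * matLog (absM R₂)).trace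
      = ((∑ i, ∑ j, c i j * (a i * Real.log (b j)) : ℝ) : ℂ) := by
    have key : absM R₁ * matLog (absM R₂)
        = U * (diagonal (RCLike.ofReal ∘ a) * W * diagonal (RCLike.ofReal ∘ Real.log ∘ b)
            * star W) * star U := by
      rw [hlogB, hAeq, hsW, hWdef]
      simp only [mul_assoc]
      rw [hU2]
      simp only [mul_one]
    rw [key, trace_conj _ _ hU1, trace_dWeW]
    push_cast
    refine Finset.sum_congr rfl fun i _ => Finset.sum_congr rfl fun j _ => ?_
    rw [hWc i j]
    simp only [Function.comp_apply, SpacetimeAux.rc_eq]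
    push_cast
    ring
  -- the real inequality
  have e1 : ∀ (f : Fin n → ℝ), ∑ i, ∑ j, c i j * f i = ∑ i, f i := by
    intro f
    refine Finset.sum_congr rfl fun i _ => ?_
    rw [← Finset.sum_mul, hrow i, one_mul]
  have e2 : ∀ (g : Fin n → ℝ), (∑ i, ∑ j, c i j * g j) = ∑ j, g j := by
    intro g
    rw [Finset.sum_comm]
    refine Finset.sum_congr rfl fun j _ => ?_
    rw [← Finset.sum_mul, hcol j, one_mul]
  have hsum : ∑ i, ∑ j, c i j * (a i - b j)
      ≤ ∑ i, ∑ j, c i j * (a i * Real.log (a i) - a i * Real.log (b j)) :=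
    Finset.sum_le_sum fun i _ => Finset.sum_le_sum fun j _ =>
      mul_le_mul_of_nonneg_left (scalar_klein (hapos i) (hbpos j)) (hcnn i j)
  have hL : ∑ i, ∑ j, c i j * (a i - b j) = (∑ i, a i) - ∑ j, b j := by
    simp only [mul_sub, Finset.sum_sub_distrib]
    rw [e1 (fun i => a i), e2 (fun j => b j)]
  have hR : ∑ i, ∑ j, c i j * (a i * Real.log (a i) - a i * Real.log (b j))
      = (∑ i, a i * Real.log (a i)) - ∑ i, ∑ j, c i j * (a i * Real.log (b j)) := by
    simp only [mul_sub, Finset.sum_sub_distrib]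
    rw [e1 (fun i => a i * Real.log (a i))]
  rw [hL, hR] at hsum
  -- conclude
  rw [trace_sub, T_A, T_B, T_AlogA, T_AlogB, ← Complex.ofReal_sub, ← Complex.ofReal_sub,
    Complex.real_le_real]
  exact hsum
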